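/- Let ρ be the sl(2)-representation on ℂ((z)) given by ρ(L_i) = −(h^{i+1}/h′)∂ + (b + ic)h^i for i = −1,0,1, where h,b ∈ ℂ((z)), h′ ≠ 0, c ∈ ℂ. Then the Casimir element C = 4((L_0 − 1/2)² − L_{−1}L_1) acts as the constant (2c+1)². -/

import Mathlib

set_option synthInstance.maxHeartbeats 1000000
set_option maxHeartbeats 1000000

noncomputable section

/-- The derivative `∂ = d/dz` on `ℂ((z))`, as a `ℂ`-linear endomorphism. -/
def Dz : Module.End ℂ (LaurentSeries ℂ) := LaurentSeries.derivative ℂ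

/-- Multiplication by a Laurent series `g`, as a `ℂ`-linear endomorphism of `ℂ((z))`. -/
def mz (g : LaurentSeries ℂ) : Module.End ℂ (LaurentSeries ℂ) where
  toFun f := g * f
  map_add' := mul_add g
  map_smul' c f := by
    show g * (c • f) = c • (g * f)
    rw [← HahnSeries.single_zero_mul_eq_smul, ← HahnSeries.single_zero_mul_eq_smul, mul_left_comm]

/-- `P` is a differential operator on `ℂ((z))` of order `≤ k`: `P = Σ_{j=0}^{k} ξ_j ∂^j`. -/
def DiffOrderLE (P : Module.End ℂ (LaurentSeries ℂ)) (k : ℕ) : Prop :=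
  ∃ ξ : ℕ → LaurentSeries ℂ, P = ∑ j ∈ Finset.range (k + 1), mz (ξ j) * Dz ^ j

/-- `P` is a differential operator on `ℂ((z))` of order `< k` (for `k = 0` this means `P = 0`). -/
def DiffOrderLT (P : Module.End ℂ (LaurentSeries ℂ)) (k : ℕ) : Prop :=
  ∃ ξ : ℕ → LaurentSeries ℂ, P = ∑ j ∈ Finset.range k, mz (ξ j) * Dz ^ j

/-- `P` is a differential operator on `ℂ((z))` of order exactly `k`. -/
def HasOrder (P : Module.End ℂ (LaurentSeries ℂ)) (k : ℕ) : Prop :=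
  DiffOrderLE P k ∧ ¬ DiffOrderLT P k

lemma mz_apply (g f : LaurentSeries ℂ) : mz g f = g * f := rfl

lemma alg_single (c : ℂ) : algebraMap ℂ (LaurentSeries ℂ) c = HahnSeries.single 0 c := by
  rw [HahnSeries.algebraMap_apply', PowerSeries.algebraMap_apply, HahnSeries.ofPowerSeries_C]
  simp [HahnSeries.C_apply]

lemma smul_eq_alg_mul (c : ℂ) (x : LaurentSeries ℂ) :
    c • x = algebraMap ℂ (LaurentSeries ℂ) c * x := by
  rw [alg_single, HahnSeries.single_zero_mul_eq_smul]

lemma Dz_coeff (f : LaurentSeries ℂ) (n : ℤ) : (Dz f).coeff n = (n + 1 : ℤ) • f.coeff (n + 1) := by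
  show ((LaurentSeries.hasseDeriv ℂ 1) f).coeff n = _
  rw [LaurentSeries.hasseDeriv_coeff]
  norm_num [Ring.choose_one_right]

lemma Dz_const (c : ℂ) : Dz (algebraMap ℂ (LaurentSeries ℂ) c) = 0 := by
  ext n
  rw [Dz_coeff, alg_single]
  rcases eq_or_ne (n + 1) 0 with hn | hn
  · simp [hn]
  · simp [HahnSeries.coeff_single, hn]

lemma Dz_one : Dz (1 : LaurentSeries ℂ) = 0 := by simpa using Dz_const 1

open HahnSeries Finset in
lemma shift_isPWO (f : LaurentSeries ℂ) : {i : ℤ | f.coeff (i+1) ≠ 0}.IsPWO := by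
  have : {i : ℤ | f.coeff (i+1) ≠ 0} = (fun n => n + (-1)) '' f.support := by
    ext i
    constructor
    · intro hi; exact ⟨i + 1, hi, by ring⟩
    · rintro ⟨j, hj, rfl⟩; simpa using hj
  rw [this]
  exact f.isPWO_support.image_of_monotone (fun a b hab => by omega)

open HahnSeries Finset in
lemma Dz_mul (f g : LaurentSeries ℂ) : Dz (f * g) = Dz f * g + f * Dz g := by
  ext n
  rw [coeff_add, Dz_coeff]
  have h1 : (Dz f * g).coeff n =
      ∑ ij ∈ antidiagonal f.isPWO_support g.isPWO_support (n+1),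
        (ij.1 : ℤ) • (f.coeff ij.1 * g.coeff ij.2) := by
    rw [coeff_mul_left' (shift_isPWO f) (fun i hi => by
      simp only [Set.mem_setOf_eq]
      intro hz
      exact hi (by rw [Dz_coeff, hz, smul_zero]))]
    refine Finset.sum_nbij' (fun ij => (ij.1 + 1, ij.2)) (fun ij => (ij.1 - 1, ij.2)) ?_ ?_ ?_ ?_ ?_
    · rintro ⟨i, j⟩ hij
      simp only [Finset.mem_antidiagonal, Set.mem_setOf_eq, mem_support] at hij ⊢
      exact ⟨hij.1, hij.2.1, by omega⟩
    · rintro ⟨i, j⟩ hij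
      simp only [Finset.mem_antidiagonal, Set.mem_setOf_eq, mem_support] at hij ⊢
      refine ⟨by simpa using hij.1, hij.2.1, by omega⟩
    · rintro ⟨i, j⟩ _; simp
    · rintro ⟨i, j⟩ _; simp
    · rintro ⟨i, j⟩ hij
      simp only [Finset.mem_antidiagonal, Set.mem_setOf_eq, mem_support] at hij
      rw [Dz_coeff, smul_mul_assoc]
  have h2 : (f * Dz g).coeff n =
      ∑ ij ∈ antidiagonal f.isPWO_support g.isPWO_support (n+1),
        (ij.2 : ℤ) • (f.coeff ij.1 * g.coeff ij.2) := by
    rw [coeff_mul_right' (shift_isPWO g) (fun i hi => by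
      simp only [Set.mem_setOf_eq]
      intro hz
      exact hi (by rw [Dz_coeff, hz, smul_zero]))]
    refine Finset.sum_nbij' (fun ij => (ij.1, ij.2 + 1)) (fun ij => (ij.1, ij.2 - 1)) ?_ ?_ ?_ ?_ ?_
    · rintro ⟨i, j⟩ hij
      simp only [Finset.mem_antidiagonal, Set.mem_setOf_eq, mem_support] at hij ⊢
      exact ⟨hij.1, hij.2.1, by omega⟩
    · rintro ⟨i, j⟩ hij
      simp only [Finset.mem_antidiagonal, Set.mem_setOf_eq, mem_support] at hij ⊢
      refine ⟨hij.1, by simpa using hij.2.1, by omega⟩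
    · rintro ⟨i, j⟩ _; simp
    · rintro ⟨i, j⟩ _; simp
    · rintro ⟨i, j⟩ hij
      simp only [Finset.mem_antidiagonal, Set.mem_setOf_eq, mem_support] at hij
      rw [Dz_coeff, mul_smul_comm]
  rw [h1, h2, ← Finset.sum_add_distrib, coeff_mul, Finset.smul_sum]
  refine Finset.sum_congr rfl ?_
  rintro ⟨i, j⟩ hij
  rw [Finset.mem_antidiagonal] at hij
  rw [← add_smul, show i + j = n + 1 from hij.2.2]

lemma Dz_inv {g : LaurentSeries ℂ} (hg : g ≠ 0) :
    Dz g⁻¹ = -(Dz g * (g⁻¹ * g⁻¹)) := by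
  have h0 : Dz g * g⁻¹ + g * Dz g⁻¹ = 0 := by
    rw [← Dz_mul, mul_inv_cancel₀ hg, Dz_one]
  have hginv : g⁻¹ * g = 1 := inv_mul_cancel₀ hg
  calc Dz g⁻¹ = g⁻¹ * g * Dz g⁻¹ := by rw [hginv, one_mul]
    _ = g⁻¹ * (Dz g * g⁻¹ + g * Dz g⁻¹) - Dz g * (g⁻¹ * g⁻¹) := by ring
    _ = -(Dz g * (g⁻¹ * g⁻¹)) := by rw [h0]; ring

/-- Let `ρ` be the `sl(2)`-representation on `ℂ((z))` given by
`ρ(L i) = −(h^{i+1}/h′)∂ + (b + i c) h^i` for `i = −1, 0, 1`.  Then the Casimir element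
`C = 4((L₀ − 1/2)² − L₋₁ L₁)` acts as the constant `(2c+1)²`. -/
theorem casimir_acts_by_constant
    (h b : LaurentSeries ℂ) (c : ℂ) (hder : Dz h ≠ 0)
    (ρ : ℤ → Module.End ℂ (LaurentSeries ℂ))
    (hρ : ∀ i : ℤ, ρ i = mz (-(h ^ (i + 1) / Dz h)) * Dz +
      mz ((b + algebraMap ℂ (LaurentSeries ℂ) ((i : ℂ) * c)) * h ^ i)) :
    (4 : ℂ) • ((ρ 0 - (1 / 2 : ℂ) • 1) ^ 2 - ρ (-1) * ρ 1) =
      ((2 * c + 1) ^ 2) • (1 : Module.End ℂ (LaurentSeries ℂ)) := by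
  have hh : h ≠ 0 := by
    intro h0
    exact hder (by rw [h0, map_zero])
  have e0 : ρ 0 = mz (-(h / Dz h)) * Dz + mz b := by
    rw [hρ]
    norm_num
  have em : ρ (-1) = mz (-(1 / Dz h)) * Dz +
      mz ((b - algebraMap ℂ (LaurentSeries ℂ) c) * h⁻¹) := by
    rw [hρ]
    norm_num [zpow_neg, sub_eq_add_neg, map_neg]
  have e1 : ρ 1 = mz (-(h * h / Dz h)) * Dz +
      mz ((b + algebraMap ℂ (LaurentSeries ℂ) c) * h) := by
    rw [hρ]
    norm_num [show ((1:ℤ) + 1) = 2 from rfl, zpow_two, pow_two]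
  have a2 : algebraMap ℂ (LaurentSeries ℂ) 2 = 2 := by
    rw [show (2:ℂ) = 1 + 1 by norm_num, map_add, map_one]
    norm_num
  haveI : CharZero (LaurentSeries ℂ) :=
    charZero_of_injective_algebraMap (RingHom.injective (algebraMap ℂ (LaurentSeries ℂ)))
  have h2 : (2 : LaurentSeries ℂ) ≠ 0 := two_ne_zero
  have Dz_two : Dz (2 : LaurentSeries ℂ) = 0 := by
    rw [show (2 : LaurentSeries ℂ) = 1 + 1 by norm_num, map_add, Dz_one, add_zero]
  have Dz_two_inv : Dz (2 : LaurentSeries ℂ)⁻¹ = 0 := by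
    rw [Dz_inv h2, Dz_two, zero_mul, neg_zero]
  have hDu : Dz ((Dz h)⁻¹) = -(Dz (Dz h) * ((Dz h)⁻¹ * (Dz h)⁻¹)) := Dz_inv hder
  have hDh : Dz h⁻¹ = -(Dz h * (h⁻¹ * h⁻¹)) := Dz_inv hh
  rw [e0, em, e1]
  refine LinearMap.ext fun f => ?_
  simp only [LinearMap.smul_apply, LinearMap.sub_apply, Module.End.mul_apply, LinearMap.add_apply,
    Module.End.one_apply, pow_two, smul_eq_alg_mul, div_eq_mul_inv, mz_apply, mul_one, map_add,
    map_neg, map_sub, map_mul, map_one, map_ofNat, Dz_mul, hDu, hDh, Dz_const, Dz_one, Dz_two, Dz_two_inv, map_pow, map_inv₀, a2]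
  field_simp [hh, hder, h2]
  have hcan : Dz h * (Dz h)⁻¹ = 1 := mul_inv_cancel₀ hder
  ring
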